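/- GAN value function identity (invoked in the proof of Proposition 1): let P and Q be probability measures on a measurable space X and let m = (1/2) • P + (1/2) • Q be their midpoint measure. Then the supremum, over all measurable discriminators D : X → ℝ with 0 < D x < 1 for all x, of ∫ log (D x) dP(x) + ∫ log (1 − D x) dQ(x), equals klDiv P m + klDiv Q m − log 4, i.e. equals 2·JSD(P, Q) − log 4 where JSD(P, Q) = (1/2)·(klDiv P m + klDiv Q m) is the Jensen–Shannon divergence. -/

import Mathlib

open MeasureTheory Real
open scoped ENNReal Classical
open scoped Topology

/-- The Kullback–Leibler divergence between two measures (as in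
`ProbabilityTheory.klDiv`, for probability measures): the integral of the
log-likelihood ratio if `μ ≪ ν` and the ratio is integrable, `⊤` otherwise. -/
noncomputable def klDiv {α : Type*} [MeasurableSpace α] (μ ν : Measure α) : EReal :=
  if μ ≪ ν ∧ Integrable (llr μ ν) μ then ((∫ x, llr μ ν x ∂μ : ℝ) : EReal) else ⊤

/-- The GAN value of a discriminator `D`:
`E_P[log D] + E_Q[log (1 − D)]`, interpreted as `⊥` (i.e. `−∞`) when the
integrals fail to be integrable. -/
noncomputable def ganValue {X : Type*} [MeasurableSpace X]
    (P Q : Measure X) (D : X → ℝ) : EReal :=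
  if Integrable (fun x => Real.log (D x)) P ∧
      Integrable (fun x => Real.log (1 - D x)) Q then
    (((∫ x, Real.log (D x) ∂P) + ∫ x, Real.log (1 - D x) ∂Q : ℝ) : EReal)
  else ⊥

section GanAux

open Filter
open scoped Topology

lemma gan_abs_mul_log_le {p : ℝ} (h0 : 0 ≤ p) (h2 : p ≤ 2) : |p * Real.log p| ≤ 2 := by
  rcases h0.eq_or_lt with h|h
  · simp [← h]
  rw [abs_le]
  rcases le_or_gt p 1 with hp|hp
  · have hl : Real.log p ≤ 0 := Real.log_nonpos h0 hp
    have h1 : Real.log p⁻¹ ≤ p⁻¹ - 1 := Real.log_le_sub_one_of_pos (by positivity)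
    rw [Real.log_inv] at h1
    constructor
    · nlinarith [mul_le_mul_of_nonneg_left h1 h.le, mul_inv_cancel₀ h.ne']
    · nlinarith [mul_nonpos_of_nonneg_of_nonpos h.le hl]
  · have hl : 0 ≤ Real.log p := Real.log_nonneg hp.le
    have h1 : Real.log p ≤ p - 1 := Real.log_le_sub_one_of_pos h
    constructor
    · nlinarith
    · nlinarith

lemma gan_key_ineq {p D : ℝ} (hp : 0 ≤ p) (hD : 0 < D) :
    p * Real.log D ≤ p * (Real.log p - Real.log 2) + (2 * D - p) := by
  rcases hp.eq_or_lt with h|h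
  · rw [← h]; simp; positivity
  · have h1 : Real.log (2 * D / p) ≤ 2 * D / p - 1 := Real.log_le_sub_one_of_pos (by positivity)
    rw [Real.log_div (by positivity) h.ne', Real.log_mul two_ne_zero hD.ne'] at h1
    have h2 := mul_le_mul_of_nonneg_left h1 h.le
    have h3 : p * (2 * D / p) = 2 * D := by field_simp
    nlinarith

lemma gan_log_four : Real.log 4 = Real.log 2 + Real.log 2 := by
  rw [show (4:ℝ) = 2 * 2 by norm_num, Real.log_mul two_ne_zero two_ne_zero]

lemma gan_abs_log_combo {e r : ℝ} (he0 : 0 < e) (he1 : e < 1) (hr : 0 < r) :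
    |Real.log (((1 - e) * r + e) / 2)| ≤ |Real.log (r / 2)| + Real.log 2 := by
  have hl2 : (0:ℝ) ≤ Real.log 2 := Real.log_nonneg one_le_two
  have ht0 : 0 < ((1 - e) * r + e) / 2 := by nlinarith
  have hhalf : Real.log (1/2 : ℝ) = -Real.log 2 := by
    rw [one_div, Real.log_inv]
  rw [abs_le]
  rcases le_total r 1 with h|h
  · have h1 : r / 2 ≤ ((1 - e) * r + e) / 2 := by nlinarith
    have h2 : ((1 - e) * r + e) / 2 ≤ 1/2 := by nlinarith
    have l1 : Real.log (r/2) ≤ Real.log (((1 - e) * r + e) / 2) :=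
      Real.log_le_log (by positivity) h1
    have l2 : Real.log (((1 - e) * r + e) / 2) ≤ Real.log (1/2 : ℝ) :=
      Real.log_le_log ht0 h2
    rw [hhalf] at l2
    constructor
    · have : -(|Real.log (r/2)|) ≤ Real.log (r/2) := neg_abs_le _
      linarith
    · linarith [abs_nonneg (Real.log (r/2))]
  · have h1 : (1:ℝ)/2 ≤ ((1 - e) * r + e) / 2 := by nlinarith
    have h2 : ((1 - e) * r + e) / 2 ≤ r/2 := by nlinarith
    have l1 : Real.log (1/2 : ℝ) ≤ Real.log (((1 - e) * r + e) / 2) :=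
      Real.log_le_log (by norm_num) h1
    have l2 : Real.log (((1 - e) * r + e) / 2) ≤ Real.log (r/2) :=
      Real.log_le_log ht0 h2
    rw [hhalf] at l1
    constructor
    · linarith [abs_nonneg (Real.log (r/2))]
    · have : Real.log (r/2) ≤ |Real.log (r/2)| := le_abs_self _
      linarith

variable {X : Type*} [MeasurableSpace X]

lemma gan_prob_m (P Q : Measure X) [IsProbabilityMeasure P] [IsProbabilityMeasure Q] :
    IsProbabilityMeasure ((1 / 2 : ℝ≥0∞) • P + (1 / 2 : ℝ≥0∞) • Q) := by
  constructor
  simp [Measure.add_apply, Measure.smul_apply, smul_eq_mul]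
  exact ENNReal.inv_two_add_inv_two

lemma gan_ac_P (P Q : Measure X) : P ≪ ((1 / 2 : ℝ≥0∞) • P + (1 / 2 : ℝ≥0∞) • Q) := by
  refine Measure.AbsolutelyContinuous.mk fun s hs h => ?_
  simp [Measure.add_apply, Measure.smul_apply, smul_eq_mul] at h
  simpa using h.1

lemma gan_ac_Q (P Q : Measure X) : Q ≪ ((1 / 2 : ℝ≥0∞) • P + (1 / 2 : ℝ≥0∞) • Q) := by
  refine Measure.AbsolutelyContinuous.mk fun s hs h => ?_
  simp [Measure.add_apply, Measure.smul_apply, smul_eq_mul] at h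
  simpa using h.2

lemma gan_sum_rnDeriv (P Q : Measure X) [IsProbabilityMeasure P] [IsProbabilityMeasure Q] :
    (fun x => (1/2 : ℝ≥0∞) * P.rnDeriv ((1 / 2 : ℝ≥0∞) • P + (1 / 2 : ℝ≥0∞) • Q) x
      + (1/2) * Q.rnDeriv ((1 / 2 : ℝ≥0∞) • P + (1 / 2 : ℝ≥0∞) • Q) x)
    =ᵐ[((1 / 2 : ℝ≥0∞) • P + (1 / 2 : ℝ≥0∞) • Q)] fun _ => 1 := by
  set m := ((1 / 2 : ℝ≥0∞) • P + (1 / 2 : ℝ≥0∞) • Q) with hm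
  haveI : IsProbabilityMeasure m := gan_prob_m P Q
  haveI : IsFiniteMeasure ((1/2 : ℝ≥0∞) • P) := P.smul_finite (by norm_num)
  haveI : IsFiniteMeasure ((1/2 : ℝ≥0∞) • Q) := Q.smul_finite (by norm_num)
  have h1 : m.rnDeriv m =ᵐ[m] ((1 / 2 : ℝ≥0∞) • P).rnDeriv m + ((1 / 2 : ℝ≥0∞) • Q).rnDeriv m :=
    Measure.rnDeriv_add ((1 / 2 : ℝ≥0∞) • P) ((1 / 2 : ℝ≥0∞) • Q) m
  have h2 := Measure.rnDeriv_smul_left_of_ne_top P m (r := 1/2) (by norm_num)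
  have h3 := Measure.rnDeriv_smul_left_of_ne_top Q m (r := 1/2) (by norm_num)
  have h4 := Measure.rnDeriv_self m
  filter_upwards [h4.symm.trans h1, h2, h3] with x h1 h2 h3
  simp only [Pi.add_apply, h2, h3, Pi.smul_apply, smul_eq_mul] at h1
  exact h1.symm

lemma gan_half_add_half {a b : ℝ≥0∞} (h : 1/2 * a + 1/2 * b = 1) :
    a.toReal + b.toReal = 2 := by
  have ha : (1/2 : ℝ≥0∞) * a ≠ ∞ := by
    refine ne_top_of_le_ne_top ENNReal.one_ne_top ?_
    calc (1/2 : ℝ≥0∞) * a ≤ 1/2 * a + 1/2 * b := le_self_add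
    _ = 1 := h
  have hb : (1/2 : ℝ≥0∞) * b ≠ ∞ := by
    refine ne_top_of_le_ne_top ENNReal.one_ne_top ?_
    calc (1/2 : ℝ≥0∞) * b ≤ 1/2 * a + 1/2 * b := le_add_self
    _ = 1 := h
  have := congrArg ENNReal.toReal h
  rw [ENNReal.toReal_add ha hb, ENNReal.toReal_mul, ENNReal.toReal_mul] at this
  simp only [ENNReal.toReal_one] at this
  have h12 : ((1/2 : ℝ≥0∞)).toReal = 1/2 := by simp
  rw [h12] at this
  linarith

lemma gan_pq_toReal (P Q : Measure X) [IsProbabilityMeasure P] [IsProbabilityMeasure Q] :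
    ∀ᵐ x ∂((1 / 2 : ℝ≥0∞) • P + (1 / 2 : ℝ≥0∞) • Q),
      (P.rnDeriv ((1 / 2 : ℝ≥0∞) • P + (1 / 2 : ℝ≥0∞) • Q) x).toReal
        + (Q.rnDeriv ((1 / 2 : ℝ≥0∞) • P + (1 / 2 : ℝ≥0∞) • Q) x).toReal = 2 := by
  filter_upwards [gan_sum_rnDeriv P Q] with x hx
  exact gan_half_add_half hx

lemma gan_integrable_mul_log_rnDeriv (P m : Measure X) [IsProbabilityMeasure P]
    [IsProbabilityMeasure m] (hle : ∀ᵐ x ∂m, (P.rnDeriv m x).toReal ≤ 2) :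
    Integrable (fun x => (P.rnDeriv m x).toReal * Real.log (P.rnDeriv m x).toReal) m := by
  refine Integrable.mono' (integrable_const 2) ?_ ?_
  · exact ((Measure.measurable_rnDeriv P m).ennreal_toReal.mul
      (Real.measurable_log.comp
        (Measure.measurable_rnDeriv P m).ennreal_toReal)).aestronglyMeasurable
  · filter_upwards [hle] with x hx
    exact gan_abs_mul_log_le ENNReal.toReal_nonneg hx

lemma gan_integrable_llr (P m : Measure X) [IsProbabilityMeasure P]
    [IsProbabilityMeasure m] (hPm : P ≪ m) (hle : ∀ᵐ x ∂m, (P.rnDeriv m x).toReal ≤ 2) :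
    Integrable (llr P m) P := by
  rw [← MeasureTheory.integrable_rnDeriv_smul_iff hPm]
  simp only [smul_eq_mul]
  exact gan_integrable_mul_log_rnDeriv P m hle

lemma gan_integral_llr_eq (P m : Measure X) [IsProbabilityMeasure P]
    [IsProbabilityMeasure m] (hPm : P ≪ m) :
    ∫ x, (P.rnDeriv m x).toReal * Real.log (P.rnDeriv m x).toReal ∂m = ∫ x, llr P m x ∂P := by
  rw [← MeasureTheory.integral_rnDeriv_smul hPm (f := llr P m)]
  simp only [smul_eq_mul, llr_def]

lemma gan_upper_bound (P Q m : Measure X) [IsProbabilityMeasure P] [IsProbabilityMeasure Q]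
    [IsProbabilityMeasure m] (hPm : P ≪ m) (hQm : Q ≪ m)
    (hpq : ∀ᵐ x ∂m, (P.rnDeriv m x).toReal + (Q.rnDeriv m x).toReal = 2)
    (D : X → ℝ) (hD : ∀ x, 0 < D x ∧ D x < 1)
    (h1 : Integrable (fun x => Real.log (D x)) P)
    (h2 : Integrable (fun x => Real.log (1 - D x)) Q) :
    (∫ x, Real.log (D x) ∂P) + ∫ x, Real.log (1 - D x) ∂Q
      ≤ (∫ x, llr P m x ∂P) + (∫ x, llr Q m x ∂Q) - Real.log 4 := by
  set p := fun x => (P.rnDeriv m x).toReal with hp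
  set q := fun x => (Q.rnDeriv m x).toReal with hq
  have hple : ∀ᵐ x ∂m, p x ≤ 2 := by
    filter_upwards [hpq] with x hx
    have : 0 ≤ q x := ENNReal.toReal_nonneg
    linarith
  have hqle : ∀ᵐ x ∂m, q x ≤ 2 := by
    filter_upwards [hpq] with x hx
    have : 0 ≤ p x := ENNReal.toReal_nonneg
    linarith
  have hplog : Integrable (fun x => p x * Real.log (p x)) m :=
    gan_integrable_mul_log_rnDeriv P m hple
  have hqlog : Integrable (fun x => q x * Real.log (q x)) m :=
    gan_integrable_mul_log_rnDeriv Q m hqle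
  have hpint : Integrable p m := Measure.integrable_toReal_rnDeriv
  have hqint : Integrable q m := Measure.integrable_toReal_rnDeriv
  have hD1 : Integrable (fun x => p x * Real.log (D x)) m := by
    have := (MeasureTheory.integrable_rnDeriv_smul_iff hPm (f := fun x => Real.log (D x))).mpr h1
    simpa only [smul_eq_mul] using this
  have hD2 : Integrable (fun x => q x * Real.log (1 - D x)) m := by
    have := (MeasureTheory.integrable_rnDeriv_smul_iff hQm
      (f := fun x => Real.log (1 - D x))).mpr h2
    simpa only [smul_eq_mul] using this
  have key : ∀ᵐ x ∂m, p x * Real.log (D x) + q x * Real.log (1 - D x)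
      ≤ (p x * Real.log (p x) - p x * Real.log 2)
        + (q x * Real.log (q x) - q x * Real.log 2) := by
    filter_upwards [hpq] with x hx
    have k1 := gan_key_ineq (p := p x) (D := D x) ENNReal.toReal_nonneg (hD x).1
    have k2 := gan_key_ineq (p := q x) (D := 1 - D x) ENNReal.toReal_nonneg
      (by linarith [(hD x).2])
    nlinarith
  have hRint : Integrable (fun x => (p x * Real.log (p x) - p x * Real.log 2)
      + (q x * Real.log (q x) - q x * Real.log 2)) m :=
    (hplog.sub (hpint.mul_const _)).add (hqlog.sub (hqint.mul_const _))
  have hmono := integral_mono_ae (hD1.add hD2) hRint key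
  simp only [Pi.add_apply] at hmono
  rw [integral_add hD1 hD2] at hmono
  have hA : Integrable (fun a => p a * Real.log (p a) - p a * Real.log 2) m :=
    hplog.sub (hpint.mul_const _)
  have hB : Integrable (fun a => q a * Real.log (q a) - q a * Real.log 2) m :=
    hqlog.sub (hqint.mul_const _)
  rw [integral_add hA hB, integral_sub hplog (hpint.mul_const (Real.log 2)),
    integral_sub hqlog (hqint.mul_const (Real.log 2)),
    integral_mul_const, integral_mul_const] at hmono
  have hip : ∫ a, p a ∂m = 1 := by
    simp only [hp]
    rw [Measure.integral_toReal_rnDeriv hPm]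
    simp
  have hiq : ∫ a, q a ∂m = 1 := by
    simp only [hq]
    rw [Measure.integral_toReal_rnDeriv hQm]
    simp
  have hIp : ∫ a, p a * Real.log (p a) ∂m = ∫ x, llr P m x ∂P := by
    simp only [hp]; exact gan_integral_llr_eq P m hPm
  have hIq : ∫ a, q a * Real.log (q a) ∂m = ∫ x, llr Q m x ∂Q := by
    simp only [hq]; exact gan_integral_llr_eq Q m hQm
  have e1 : ∫ x, p x * Real.log (D x) ∂m = ∫ x, Real.log (D x) ∂P := by
    simp only [hp]
    rw [← MeasureTheory.integral_rnDeriv_smul hPm (f := fun x => Real.log (D x))]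
    simp only [smul_eq_mul]
  have e2 : ∫ x, q x * Real.log (1 - D x) ∂m = ∫ x, Real.log (1 - D x) ∂Q := by
    simp only [hq]
    rw [← MeasureTheory.integral_rnDeriv_smul hQm (f := fun x => Real.log (1 - D x))]
    simp only [smul_eq_mul]
  rw [hip, hiq, hIp, hIq, e1, e2] at hmono
  rw [gan_log_four]
  linarith

lemma gan_tendsto_side (M m : Measure X) [IsProbabilityMeasure M] [IsProbabilityMeasure m]
    (hMm : M ≪ m) (hle : ∀ᵐ x ∂m, (M.rnDeriv m x).toReal ≤ 2)
    (hllr : Integrable (llr M m) M)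
    (u : ℕ → ℝ) (hu0 : ∀ n, 0 < u n) (hu1 : ∀ n, u n < 1)
    (hu : Filter.Tendsto u Filter.atTop (𝓝 0)) :
    Filter.Tendsto
      (fun n => ∫ x, Real.log (((1 - u n) * min (M.rnDeriv m x).toReal 2 + u n) / 2) ∂M)
      Filter.atTop (𝓝 ((∫ x, llr M m x ∂M) - Real.log 2)) := by
  set r := fun x => min (M.rnDeriv m x).toReal 2 with hrdef
  have hrmeas : Measurable r :=
    (Measure.measurable_rnDeriv M m).ennreal_toReal.min measurable_const
  have haepos : ∀ᵐ x ∂M, 0 < (M.rnDeriv m x).toReal := by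
    have h1 := Measure.rnDeriv_pos hMm
    have h2 : ∀ᵐ x ∂M, M.rnDeriv m x < ∞ := hMm.ae_le (Measure.rnDeriv_lt_top M m)
    filter_upwards [h1, h2] with x h1 h2
    exact ENNReal.toReal_pos h1.ne' h2.ne
  have haele : ∀ᵐ x ∂M, (M.rnDeriv m x).toReal ≤ 2 := hMm.ae_le hle
  have key : Filter.Tendsto (fun n => ∫ x, Real.log (((1 - u n) * r x + u n) / 2) ∂M)
      Filter.atTop (𝓝 (∫ x, (llr M m x - Real.log 2) ∂M)) := by
    refine tendsto_integral_of_dominated_convergence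
      (fun x => |llr M m x| + 2 * Real.log 2) (fun n => ?_)
      (hllr.abs.add (integrable_const _)) (fun n => ?_) ?_
    · exact (Real.measurable_log.comp
        ((((measurable_const.sub measurable_const).mul hrmeas).add measurable_const).div
          measurable_const)).aestronglyMeasurable
    · filter_upwards [haepos, haele] with x hpos hle2
      have hr : r x = (M.rnDeriv m x).toReal := min_eq_left hle2
      have := gan_abs_log_combo (hu0 n) (hu1 n) (hr ▸ hpos : 0 < r x)
      rw [Real.norm_eq_abs]
      refine this.trans ?_
      have : Real.log (r x / 2) = Real.log (r x) - Real.log 2 :=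
        Real.log_div (by rw [hr]; exact hpos.ne') two_ne_zero
      rw [this, hr]
      have : |Real.log (M.rnDeriv m x).toReal - Real.log 2| ≤ |llr M m x| + Real.log 2 := by
        rw [llr_def]
        exact (abs_sub _ _).trans (by
          simp [abs_of_nonneg (Real.log_nonneg (one_le_two : (1:ℝ) ≤ 2))])
      linarith [Real.log_nonneg (one_le_two : (1:ℝ) ≤ 2)]
    · filter_upwards [haepos, haele] with x hpos hle2
      have hr : r x = (M.rnDeriv m x).toReal := min_eq_left hle2
      have harg : Filter.Tendsto (fun n => ((1 - u n) * r x + u n) / 2)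
          Filter.atTop (𝓝 (r x / 2)) := by
        have : Filter.Tendsto (fun n => ((1 - u n) * r x + u n))
            Filter.atTop (𝓝 ((1 - 0) * r x + 0)) :=
          (((tendsto_const_nhds.sub hu).mul tendsto_const_nhds).add hu)
        simpa using this.div_const 2
      have hcont : ContinuousAt Real.log (r x / 2) :=
        Real.continuousAt_log (by rw [hr]; positivity)
      have hten := hcont.tendsto.comp harg
      have heq : Real.log (r x / 2) = llr M m x - Real.log 2 := by
        rw [hr, llr_def]
        exact Real.log_div hpos.ne' two_ne_zero
      rw [heq] at hten
      exact hten
  have : ∫ x, (llr M m x - Real.log 2) ∂M = (∫ x, llr M m x ∂M) - Real.log 2 := by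
    rw [integral_sub hllr (integrable_const _), integral_const]
    simp
  rwa [this] at key

end GanAux

/-- GAN value function identity: the supremum over all measurable
discriminators with values in `(0,1)` of the GAN value equals
`klDiv P m + klDiv Q m − log 4 = 2·JSD(P,Q) − log 4`, where
`m = (1/2) • P + (1/2) • Q`. -/
theorem gan_value_function_identity
    {X : Type*} [MeasurableSpace X] (P Q : Measure X)
    [IsProbabilityMeasure P] [IsProbabilityMeasure Q] :
    (⨆ D : {D : X → ℝ // Measurable D ∧ ∀ x, 0 < D x ∧ D x < 1},
        ganValue P Q D.1)
      = klDiv P ((1 / 2 : ℝ≥0∞) • P + (1 / 2 : ℝ≥0∞) • Q)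
        + klDiv Q ((1 / 2 : ℝ≥0∞) • P + (1 / 2 : ℝ≥0∞) • Q)
        - (Real.log 4 : EReal) := by
  set m := ((1 / 2 : ℝ≥0∞) • P + (1 / 2 : ℝ≥0∞) • Q) with hm
  haveI : IsProbabilityMeasure m := gan_prob_m P Q
  have hPm : P ≪ m := gan_ac_P P Q
  have hQm : Q ≪ m := gan_ac_Q P Q
  have hpq : ∀ᵐ x ∂m, (P.rnDeriv m x).toReal + (Q.rnDeriv m x).toReal = 2 :=
    gan_pq_toReal P Q
  have hple : ∀ᵐ x ∂m, (P.rnDeriv m x).toReal ≤ 2 := by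
    filter_upwards [hpq] with x hx
    have : (0:ℝ) ≤ (Q.rnDeriv m x).toReal := ENNReal.toReal_nonneg
    linarith
  have hqle : ∀ᵐ x ∂m, (Q.rnDeriv m x).toReal ≤ 2 := by
    filter_upwards [hpq] with x hx
    have : (0:ℝ) ≤ (P.rnDeriv m x).toReal := ENNReal.toReal_nonneg
    linarith
  have hllrP : Integrable (llr P m) P := gan_integrable_llr P m hPm hple
  have hllrQ : Integrable (llr Q m) Q := gan_integrable_llr Q m hQm hqle
  set L : ℝ := (∫ x, llr P m x ∂P) + (∫ x, llr Q m x ∂Q) - Real.log 4 with hL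
  have hRHS : klDiv P m + klDiv Q m - (Real.log 4 : EReal) = ((L : ℝ) : EReal) := by
    rw [klDiv, if_pos ⟨hPm, hllrP⟩, klDiv, if_pos ⟨hQm, hllrQ⟩, hL]
    norm_cast
  rw [hRHS]
  apply le_antisymm
  · refine iSup_le fun D => ?_
    obtain ⟨D, hDmeas, hD⟩ := D
    show ganValue P Q D ≤ _
    rw [ganValue]
    split_ifs with h
    · exact EReal.coe_le_coe_iff.mpr
        (gan_upper_bound P Q m hPm hQm hpq D hD h.1 h.2)
    · exact bot_le
  · -- lower bound via a sequence of discriminators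
    set u : ℕ → ℝ := fun n => (1 / ((n : ℝ) + 1)) / 2 with hu
    have hu0 : ∀ n, 0 < u n := fun n => by positivity
    have hu1 : ∀ n, u n < 1 := by
      intro n
      have h1 : (1:ℝ) / ((n : ℝ) + 1) ≤ 1 := by
        rw [div_le_one (by positivity)]
        linarith [Nat.cast_nonneg (α := ℝ) n]
      simp only [hu]
      linarith
    have hut : Filter.Tendsto u Filter.atTop (𝓝 0) := by
      have := (tendsto_one_div_add_atTop_nhds_zero_nat (𝕜 := ℝ)).div_const 2
      simpa [hu] using this
    set Dn : ℕ → X → ℝ :=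
      fun n x => ((1 - u n) * min (P.rnDeriv m x).toReal 2 + u n) / 2 with hDn
    have hmin : ∀ x, 0 ≤ min (P.rnDeriv m x).toReal 2 ∧ min (P.rnDeriv m x).toReal 2 ≤ 2 :=
      fun x => ⟨le_min ENNReal.toReal_nonneg (by norm_num), min_le_right _ _⟩
    have hDmeas : ∀ n, Measurable (Dn n) := by
      intro n
      exact (((measurable_const.sub measurable_const).mul
        ((Measure.measurable_rnDeriv P m).ennreal_toReal.min measurable_const)).add
          measurable_const).div measurable_const
    have hDbound : ∀ n x, 0 < Dn n x ∧ Dn n x < 1 := by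
      intro n x
      obtain ⟨hm0, hm2⟩ := hmin x
      have h0 := hu0 n
      have h1 := hu1 n
      constructor
      · simp only [hDn]; nlinarith
      · simp only [hDn]; nlinarith
    have hDlow : ∀ n x, u n / 2 ≤ Dn n x ∧ Dn n x ≤ 1 := by
      intro n x
      obtain ⟨hm0, hm2⟩ := hmin x
      have h0 := hu0 n
      have h1 := hu1 n
      constructor
      · simp only [hDn]; nlinarith
      · simp only [hDn]; nlinarith
    have habs : ∀ (c t : ℝ), 0 < c → c ≤ t → t ≤ 1 → |Real.log t| ≤ |Real.log c| := by
      intro c t hc hct ht1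
      have hc1 : c ≤ 1 := hct.trans ht1
      rw [abs_of_nonpos (Real.log_nonpos (hc.le.trans hct) ht1),
        abs_of_nonpos (Real.log_nonpos hc.le hc1)]
      exact neg_le_neg (Real.log_le_log hc hct)
    have hInt1 : ∀ n, Integrable (fun x => Real.log (Dn n x)) P := by
      intro n
      refine Integrable.mono' (integrable_const |Real.log (u n / 2)|)
        (Real.measurable_log.comp (hDmeas n)).aestronglyMeasurable ?_
      filter_upwards with x
      rw [Real.norm_eq_abs]
      exact habs _ _ (by positivity) (hDlow n x).1 (hDlow n x).2
    have hone : ∀ n x, 1 - Dn n x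
        = ((1 - u n) * (2 - min (P.rnDeriv m x).toReal 2) + u n) / 2 := by
      intro n x
      simp only [hDn]
      ring
    have hone_low : ∀ n x, u n / 2 ≤ 1 - Dn n x ∧ 1 - Dn n x ≤ 1 := by
      intro n x
      have := hDbound n x
      have := hDlow n x
      constructor
      · rw [hone n x]
        obtain ⟨hm0, hm2⟩ := hmin x
        have h0 := hu0 n
        have h1 := hu1 n
        nlinarith
      · linarith [(hDbound n x).1]
    have hInt2 : ∀ n, Integrable (fun x => Real.log (1 - Dn n x)) Q := by
      intro n
      refine Integrable.mono' (integrable_const |Real.log (u n / 2)|)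
        (Real.measurable_log.comp (measurable_const.sub (hDmeas n))).aestronglyMeasurable ?_
      filter_upwards with x
      rw [Real.norm_eq_abs]
      exact habs _ _ (by positivity) (hone_low n x).1 (hone_low n x).2
    set A : ℕ → ℝ := fun n => ∫ x, Real.log (Dn n x) ∂P with hA
    set B : ℕ → ℝ := fun n => ∫ x, Real.log (1 - Dn n x) ∂Q with hB
    have hval : ∀ n, ganValue P Q (Dn n) = ((A n + B n : ℝ) : EReal) := by
      intro n
      rw [ganValue, if_pos ⟨hInt1 n, hInt2 n⟩]
    have htA : Filter.Tendsto A Filter.atTop (𝓝 ((∫ x, llr P m x ∂P) - Real.log 2)) :=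
      gan_tendsto_side P m hPm hple hllrP u hu0 hu1 hut
    have htB : Filter.Tendsto B Filter.atTop (𝓝 ((∫ x, llr Q m x ∂Q) - Real.log 2)) := by
      have hcong : ∀ n, B n
          = ∫ x, Real.log (((1 - u n) * min (Q.rnDeriv m x).toReal 2 + u n) / 2) ∂Q := by
        intro n
        refine integral_congr_ae ?_
        filter_upwards [hQm.ae_le hpq] with x hx
        have hp0 : (0:ℝ) ≤ (P.rnDeriv m x).toReal := ENNReal.toReal_nonneg
        have hq0 : (0:ℝ) ≤ (Q.rnDeriv m x).toReal := ENNReal.toReal_nonneg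
        have hminp : min (P.rnDeriv m x).toReal 2 = (P.rnDeriv m x).toReal :=
          min_eq_left (by linarith)
        have hminq : min (Q.rnDeriv m x).toReal 2 = (Q.rnDeriv m x).toReal :=
          min_eq_left (by linarith)
        rw [hone n x, hminp, hminq]
        have h2 : 2 - (P.rnDeriv m x).toReal = (Q.rnDeriv m x).toReal := by linarith
        rw [h2]
      have := gan_tendsto_side Q m hQm hqle hllrQ u hu0 hu1 hut
      rwa [show (fun n => ∫ x, Real.log (((1 - u n) * min (Q.rnDeriv m x).toReal 2 + u n) / 2) ∂Q)
        = B from funext fun n => (hcong n).symm] at this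
    have htAB : Filter.Tendsto (fun n => A n + B n) Filter.atTop (𝓝 L) := by
      have := htA.add htB
      have heq : (∫ x, llr P m x ∂P) - Real.log 2 + ((∫ x, llr Q m x ∂Q) - Real.log 2) = L := by
        rw [hL, gan_log_four]; ring
      rwa [heq] at this
    have hle' : ∀ n, ((A n + B n : ℝ) : EReal)
        ≤ ⨆ D : {D : X → ℝ // Measurable D ∧ ∀ x, 0 < D x ∧ D x < 1}, ganValue P Q D.1 := by
      intro n
      rw [← hval n]
      exact le_iSup (fun D : {D : X → ℝ // Measurable D ∧ ∀ x, 0 < D x ∧ D x < 1} =>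
        ganValue P Q D.1) ⟨Dn n, hDmeas n, hDbound n⟩
    have htE : Filter.Tendsto (fun n => ((A n + B n : ℝ) : EReal)) Filter.atTop
        (𝓝 ((L : ℝ) : EReal)) := EReal.tendsto_coe.mpr htAB
    exact le_of_tendsto htE (Filter.Eventually.of_forall hle')
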